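/- If ρ = d(x,K) > 0 for a point x in a normed space and K a closed convex cone, then for every ε ∈ (0,ρ) there exists a nonzero x* ∈ K⁺ with ‖x*‖ = 1 such that −x*(x) ≥ ρ − ε. -/

import Mathlib

open Pointwise

set_option maxHeartbeats 1000000
set_option synthInstance.maxHeartbeats 400000

/-- Separation step: if `d(x,K) = ρ > 0` then for every `ε ∈ (0,ρ)` there is a
norm-one positive functional `f ∈ K⁺` with `-f x ≥ ρ - ε`. -/
theorem exists_separating_functional
    {X : Type*} [NormedAddCommGroup X] [NormedSpace ℝ X]
    (K : Set X) (hKcl : IsClosed K) (hKconv : Convex ℝ K)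
    (hK0 : (0 : X) ∈ K)
    (hKcone : ∀ t : ℝ, 0 ≤ t → ∀ y ∈ K, t • y ∈ K)
    (x : X) (ρ : ℝ) (hρ : ρ = Metric.infDist x K) (hρpos : 0 < ρ)
    (ε : ℝ) (hε0 : 0 < ε) (hερ : ε < ρ) :
    ∃ f : X →L[ℝ] ℝ, f ≠ 0 ∧ (∀ k ∈ K, 0 ≤ f k) ∧ ‖f‖ = 1 ∧ ρ - ε ≤ -f x := by
  -- the open ball B(x, ρ) is disjoint from K
  have hdisj : Disjoint (Metric.ball x ρ) K := by
    rw [Set.disjoint_left]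
    intro y hy hyK
    have h1 : Metric.infDist x K ≤ dist x y := Metric.infDist_le_dist_of_mem hyK
    rw [← hρ, dist_comm] at h1
    exact absurd (Metric.mem_ball.mp hy) (not_lt.mpr h1)
  obtain ⟨f, u, hfu, huf⟩ :=
    geometric_hahn_banach_open (convex_ball x ρ) Metric.isOpen_ball hKconv hdisj
  have hxball : x ∈ Metric.ball x ρ := Metric.mem_ball_self hρpos
  have hu0 : u ≤ 0 := by simpa using huf 0 hK0
  have hfx : f x < 0 := lt_of_lt_of_le (hfu x hxball) hu0
  -- f is nonneg on K
  have hfK : ∀ k ∈ K, 0 ≤ f k := by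
    intro k hk
    by_contra h
    push_neg at h
    have ht : (0:ℝ) < (u - 1) / f k := div_pos_of_neg_of_neg (by linarith) h
    have := huf _ (hKcone _ ht.le k hk)
    rw [map_smul, smul_eq_mul, div_mul_cancel₀ _ (ne_of_lt h)] at this
    linarith
  have hfne : f ≠ 0 := by
    intro h
    rw [h] at hfx
    simp at hfx
  have hfnorm : 0 < ‖f‖ := norm_pos_iff.mpr hfne
  -- key bound: ρ * ‖f‖ ≤ -f x
  have hkey : ρ * ‖f‖ ≤ -f x := by
    have hr : ∀ r : ℝ, 0 < r → r < ρ → r * ‖f‖ ≤ -f x := by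
      intro r hr0 hrρ
      have hC : ‖f‖ ≤ (-f x) / r := by
        apply ContinuousLinearMap.opNorm_le_bound _ (div_nonneg (by linarith) hr0.le)
        intro v
        rcases eq_or_ne v 0 with rfl | hv
        · simp
        have hvn : (0:ℝ) < ‖v‖ := norm_pos_iff.mpr hv
        have hmem : ∀ s : ℝ, |s| = r / ‖v‖ → x + s • v ∈ Metric.ball x ρ := by
          intro s hs
          rw [Metric.mem_ball, dist_eq_norm]
          simp only [add_sub_cancel_left, norm_smul, Real.norm_eq_abs, hs]
          rw [div_mul_cancel₀ _ hvn.ne']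
          exact hrρ
        have h1 := hfu _ (hmem (r / ‖v‖) (abs_of_pos (div_pos hr0 hvn)))
        have h2 := hfu _ (hmem (-(r / ‖v‖)) (by rw [abs_neg, abs_of_pos (div_pos hr0 hvn)]))
        rw [map_add, map_smul, smul_eq_mul] at h1 h2
        set q := r / ‖v‖ with hqdef
        have hq0 : 0 < q := div_pos hr0 hvn
        have h1' : q * f v ≤ -f x := by linarith
        have h2' : -(q * f v) ≤ -f x := by linarith
        have habs : |f v| ≤ -f x / q := by
          rw [abs_le]
          constructor
          · rw [neg_le, le_div_iff₀ hq0]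
            linarith
          · rw [le_div_iff₀ hq0]
            linarith
        have heq : -f x / q = -f x / r * ‖v‖ := by
          rw [hqdef]
          field_simp
        rw [Real.norm_eq_abs, ← heq]
        exact habs
      calc r * ‖f‖ ≤ r * ((-f x) / r) := by
            exact mul_le_mul_of_nonneg_left hC hr0.le
        _ = -f x := by field_simp
    by_contra h
    push_neg at h
    have h1 : -f x / ‖f‖ < ρ := (div_lt_iff₀ hfnorm).mpr (by linarith)
    obtain ⟨r, hr1, hr2⟩ := exists_between (max_lt_iff.mpr ⟨by linarith, h1⟩ :
      max (ρ/2) (-f x / ‖f‖) < ρ)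
    have hr0 : 0 < r := lt_of_lt_of_le (by linarith) (le_of_lt (lt_of_le_of_lt (le_max_left _ _) hr1))
    have := hr r hr0 hr2
    have h2 : -f x / ‖f‖ < r := lt_of_le_of_lt (le_max_right _ _) hr1
    rw [div_lt_iff₀ hfnorm] at h2
    linarith
  refine ⟨‖f‖⁻¹ • f, ?_, ?_, ?_, ?_⟩
  · intro h
    have := congrArg (fun g : X →L[ℝ] ℝ => g x) h
    simp only [ContinuousLinearMap.coe_smul', Pi.smul_apply, smul_eq_mul,
      ContinuousLinearMap.zero_apply] at this
    rcases mul_eq_zero.mp this with h' | h'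
    · exact (inv_ne_zero hfnorm.ne') h'
    · exact hfx.ne h'
  · intro k hk
    simp only [ContinuousLinearMap.coe_smul', Pi.smul_apply, smul_eq_mul]
    exact mul_nonneg (inv_nonneg.mpr hfnorm.le) (hfK k hk)
  · rw [norm_smul (‖f‖⁻¹) f, norm_inv, norm_norm, inv_mul_cancel₀ hfnorm.ne']
  · simp only [ContinuousLinearMap.coe_smul', Pi.smul_apply, smul_eq_mul]
    have h2 : ρ ≤ ‖f‖⁻¹ * -f x := by
      rw [inv_mul_eq_div, le_div_iff₀ hfnorm]
      linarith
    nlinarith
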